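/- For any normal monotone circuit C that is a d-DNNF in zero-suppressed semantics, each OR-component of C is a multitree. -/

import Mathlib

/-- The type of a gate in a monotone circuit: variable gate, AND-gate, or OR-gate. -/
inductive GateType : Type
  | var
  | and
  | or
  deriving DecidableEq

/-- A monotone circuit: a finite DAG of gates with wires, a distinguished output gate,
each gate labeled as a variable gate (carrying a variable label in `ι`), an AND-gate,
or an OR-gate.  Variable gates have no inputs, and the wire relation is acyclic. -/
structure Circuit (ι : Type) [DecidableEq ι] where
  Gate : Type
  fintypeGate : Fintype Gate
  decEqGate : DecidableEq Gate
  wire : Gate → Gate → Prop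
  decWire : ∀ a b : Gate, Decidable (wire a b)
  typ : Gate → GateType
  vlab : Gate → ι
  output : Gate
  var_no_input : ∀ g g' : Gate, typ g' = GateType.var → ¬ wire g g'
  acyclic : ∀ g : Gate, ¬ Relation.TransGen wire g g

attribute [instance] Circuit.fintypeGate Circuit.decEqGate Circuit.decWire

namespace Circuit

variable {ι : Type} [DecidableEq ι]

/-- The inputs of a gate `g`: the gates with a wire to `g`. -/
def inputs (C : Circuit ι) (g : C.Gate) : Finset C.Gate :=
  Finset.univ.filter fun g' => C.wire g' g

/-- The fan-in of a gate: its number of inputs. -/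
def fanin (C : Circuit ι) (g : C.Gate) : ℕ :=
  (C.inputs g).card

/-- The gates that `g` is an input of. -/
def outs (C : Circuit ι) (g : C.Gate) : Finset C.Gate :=
  Finset.univ.filter fun g' => C.wire g g'

/-- The size of a circuit: its number of gates plus its number of wires. -/
noncomputable def size (C : Circuit ι) : ℕ :=
  Fintype.card C.Gate + {p : C.Gate × C.Gate | C.wire p.1 p.2}.ncard

/-- Zero-suppressed semantics: `Captures C g t` says that the assignment `t`
(a finite set of variables) belongs to the set captured by gate `g`, defined bottom-up:
a variable gate captures exactly its own singleton; an AND-gate captures the unions of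
assignments captured by its inputs (one from each input); an OR-gate captures the union
of the sets captured by its inputs. -/
inductive Captures (C : Circuit ι) : C.Gate → Finset ι → Prop
  | var (g : C.Gate) (h : C.typ g = GateType.var) : Captures C g {C.vlab g}
  | and (g : C.Gate) (h : C.typ g = GateType.and) (f : C.Gate → Finset ι)
      (hf : ∀ g' ∈ C.inputs g, Captures C g' (f g')) :
      Captures C g ((C.inputs g).biUnion f)
  | or (g : C.Gate) (h : C.typ g = GateType.or) (g' : C.Gate) (hg' : g' ∈ C.inputs g)
      (t : Finset ι) (ht : Captures C g' t) : Captures C g t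

/-- The set `S(g)` of assignments captured by a gate `g` in zero-suppressed semantics. -/
def S (C : Circuit ι) (g : C.Gate) : Set (Finset ι) :=
  {t | C.Captures g t}

/-- The captured set `S(C)` of the circuit: the captured set of its output gate. -/
def captured (C : Circuit ι) : Set (Finset ι) :=
  C.S C.output

/-- `C.Reaches g g'` holds when there is a (possibly empty) directed path of wires
from `g` to `g'`. -/
def Reaches (C : Circuit ι) : C.Gate → C.Gate → Prop :=
  Relation.ReflTransGen C.wire

/-- An AND-gate is decomposable if no variable gate has directed paths to two distinct
inputs of it. -/
def DecomposableAnd (C : Circuit ι) (g : C.Gate) : Prop :=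
  ∀ v g1 g2 : C.Gate, C.typ v = GateType.var → g1 ∈ C.inputs g → g2 ∈ C.inputs g →
    g1 ≠ g2 → C.Reaches v g1 → C.Reaches v g2 → False

/-- An OR-gate is deterministic if the captured sets of any two distinct inputs
are disjoint. -/
def DeterministicOr (C : Circuit ι) (g : C.Gate) : Prop :=
  ∀ g1 g2 : C.Gate, g1 ∈ C.inputs g → g2 ∈ C.inputs g → g1 ≠ g2 →
    Disjoint (C.S g1) (C.S g2)

/-- A circuit is a d-DNNF in zero-suppressed semantics if every AND-gate is decomposable
and every OR-gate is deterministic. -/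
def dDNNF (C : Circuit ι) : Prop :=
  (∀ g : C.Gate, C.typ g = GateType.and → C.DecomposableAnd g) ∧
  (∀ g : C.Gate, C.typ g = GateType.or → C.DeterministicOr g)

/-- Distinct variable gates carry distinct variable labels (i.e., variables can be
identified with variable gates, as in the paper). -/
def VarInj (C : Circuit ι) : Prop :=
  Set.InjOn C.vlab {g : C.Gate | C.typ g = GateType.var}

/-- `C` is ∅-pruned: every gate captures a nonempty set (no gate is unsatisfiable). -/
def EmptyPruned (C : Circuit ι) : Prop :=
  ∀ g : C.Gate, (C.S g).Nonempty

/-- `C` is {}-pruned: no gate captures a set containing the empty assignment. -/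
def ZeroPruned (C : Circuit ι) : Prop :=
  ∀ g : C.Gate, (∅ : Finset ι) ∉ C.S g

/-- An exit: an OR-gate having an input which is not an OR-gate. -/
def IsExit (C : Circuit ι) (g : C.Gate) : Prop :=
  C.typ g = GateType.or ∧ ∃ g' ∈ C.inputs g, C.typ g' ≠ GateType.or

/-- A normal circuit: arity-two, ∅-pruned, {}-pruned, collapsed, and discriminative. -/
def Normal (C : Circuit ι) : Prop :=
  (∀ g : C.Gate, C.fanin g ≤ 2) ∧
  C.EmptyPruned ∧
  C.ZeroPruned ∧
  (∀ g : C.Gate, C.typ g = GateType.and → C.fanin g ≠ 1) ∧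
  (∀ g : C.Gate, C.IsExit g →
    C.fanin g = 1 ∧ (C.outs g).card = 1 ∧ ∀ g' : C.Gate, C.wire g g' → C.typ g' = GateType.or)

/-- A wire both of whose endpoints are OR-gates. -/
def orWire (C : Circuit ι) (a b : C.Gate) : Prop :=
  C.wire a b ∧ C.typ a = GateType.or ∧ C.typ b = GateType.or

/-- The OR-component of an OR-gate `g`: the OR-gates connected to `g` by paths
traversing, in either direction, only wires both of whose endpoints are OR-gates. -/
def orComponent (C : Circuit ι) (g : C.Gate) : Set C.Gate :=
  {g' : C.Gate | C.typ g' = GateType.or ∧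
    Relation.ReflTransGen (fun x y => C.orWire x y ∨ C.orWire y x) g g'}

/-- The exits of an OR-gate `g`: the exits of its OR-component having a directed path
to `g` within the OR-component. -/
def exitsOf (C : Circuit ι) (g : C.Gate) : Set C.Gate :=
  {e : C.Gate | C.IsExit e ∧ Relation.ReflTransGen C.orWire e g}

/-- An OR-path of `C`: a directed path (of length at least one) all of whose
intermediate gates are OR-gates. -/
inductive OrPath (C : Circuit ι) : C.Gate → C.Gate → Prop
  | single (a b : C.Gate) (h : C.wire a b) : OrPath C a b
  | step (a m b : C.Gate) (h : C.wire a m) (hm : C.typ m = GateType.or)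
      (hp : OrPath C m b) : OrPath C a b

/-- A gate is 0-valid if it captures the empty assignment. -/
def ZeroValid (C : Circuit ι) (g : C.Gate) : Prop :=
  (∅ : Finset ι) ∈ C.S g

/-- A wire `(g, g')` is pure if `g'` is an OR-gate, or `g'` is an AND-gate all of whose
other inputs are 0-valid. -/
def PureWire (C : Circuit ι) (g g' : C.Gate) : Prop :=
  C.wire g g' ∧
    (C.typ g' = GateType.or ∨
      (C.typ g' = GateType.and ∧ ∀ h ∈ C.inputs g', h ≠ g → C.ZeroValid h))

/-- A gate `g` is upwards-deterministic if it is unsatisfiable or there is at most one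
gate `g'` such that `(g, g')` is a pure wire. -/
def UpDetGate (C : Circuit ι) (g : C.Gate) : Prop :=
  C.S g = ∅ ∨ ∀ g1 g2 : C.Gate, C.PureWire g g1 → C.PureWire g g2 → g1 = g2

/-- A circuit is upwards-deterministic if all its AND-gates and OR-gates are. -/
def UpwardsDeterministic (C : Circuit ι) : Prop :=
  ∀ g : C.Gate, (C.typ g = GateType.and ∨ C.typ g = GateType.or) → C.UpDetGate g

end Circuit

/-- `IsTrail E a l b`: the list `l` of vertices (after `a`) forms a directed path
from `a` to `b` following edges of `E`; distinct lists are distinct directed paths. -/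
def IsTrail {α : Type*} (E : α → α → Prop) : α → List α → α → Prop
  | a, [], b => a = b
  | a, x :: l, b => E a x ∧ IsTrail E x l b

/-- A directed graph is a multitree if it is acyclic and, for every pair of distinct
vertices, there is at most one directed path from the first to the second. -/
def IsMultitree {α : Type*} (E : α → α → Prop) : Prop :=
  (∀ a : α, ¬ Relation.TransGen E a a) ∧
  ∀ a b : α, a ≠ b → ∀ l1 l2 : List α, IsTrail E a l1 b → IsTrail E a l2 b → l1 = l2


section Aux

variable {α : Type*} {E : α → α → Prop}

lemma isTrail_rtg : ∀ (l : List α) (a b : α), IsTrail E a l b → Relation.ReflTransGen E a b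
  | [], a, b, h => by cases h; exact Relation.ReflTransGen.refl
  | x :: l, a, b, h => (Relation.ReflTransGen.single h.1).trans (isTrail_rtg l x b h.2)

lemma isTrail_last_mem : ∀ (l : List α) (a x b : α), IsTrail E a (x :: l) b → b ∈ x :: l
  | [], a, x, b, h => by cases h.2; exact List.mem_cons_self
  | y :: l, a, x, b, h =>
      List.mem_cons_of_mem _ (isTrail_last_mem l x y b h.2)

lemma isTrail_pred : ∀ (l : List α) (x b : α), IsTrail E x l b → ∀ z ∈ l,
    ∃ w, E w z ∧ Relation.ReflTransGen E x w ∧ (w = x ∨ w ∈ l)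
  | [], x, b, _, z, hz => absurd hz (by simp)
  | y :: l, x, b, h, z, hz => by
      rcases List.mem_cons.1 hz with rfl | hz
      · exact ⟨x, h.1, Relation.ReflTransGen.refl, Or.inl rfl⟩
      · obtain ⟨w, hw1, hw2, hw3⟩ := isTrail_pred l y b h.2 z hz
        refine ⟨w, hw1, (Relation.ReflTransGen.single h.1).trans hw2, Or.inr ?_⟩
        rcases hw3 with rfl | hw3
        · exact List.mem_cons_self
        · exact List.mem_cons_of_mem _ hw3

lemma isTrail_first_common : ∀ (l : List α) (x b : α) (s : List α),
    IsTrail E x l b → x ∉ s → b ∈ s →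
    ∃ w z, E w z ∧ z ∈ s ∧ w ∉ s ∧ Relation.ReflTransGen E x w
  | [], x, b, s, h, hx, hb => by cases h; exact absurd hb hx
  | y :: l, x, b, s, h, hx, hb => by
      by_cases hy : y ∈ s
      · exact ⟨x, y, h.1, hy, hx, Relation.ReflTransGen.refl⟩
      · obtain ⟨w, z, h1, h2, h3, h4⟩ := isTrail_first_common l y b s h.2 hy hb
        exact ⟨w, z, h1, h2, h3, (Relation.ReflTransGen.single h.1).trans h4⟩

lemma multitree_of_no_join
    (hacyc : ∀ a : α, ¬ Relation.TransGen E a a)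
    (hjoin : ∀ a w1 w2 z : α, Relation.ReflTransGen E a w1 →
      Relation.ReflTransGen E a w2 → E w1 z → E w2 z → w1 = w2) :
    ∀ (l1 l2 : List α) (a b : α), a ≠ b → IsTrail E a l1 b → IsTrail E a l2 b → l1 = l2
  | [], l2, a, b, hab, h1, h2 => absurd h1 hab
  | x :: t1, [], a, b, hab, h1, h2 => absurd h2 hab
  | x :: t1, y :: t2, a, b, hab, h1, h2 => by
      have hanotins : a ∉ y :: t2 := by
        intro ha
        rcases List.mem_cons.1 ha with rfl | ha
        · exact hacyc a (Relation.TransGen.single h2.1)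
        · obtain ⟨w, hw1, hw2, _⟩ := isTrail_pred t2 y b h2.2 a ha
          exact hacyc a (Relation.TransGen.tail'
            ((Relation.ReflTransGen.single h2.1).trans hw2) hw1)
      have hxy : x = y := by
        by_contra hxy
        by_cases hxs : x ∈ y :: t2
        · rcases List.mem_cons.1 hxs with rfl | hxs
          · exact hxy rfl
          · obtain ⟨w, hw1, hw2, hw3⟩ := isTrail_pred t2 y b h2.2 x hxs
            have : a = w := hjoin a a w x Relation.ReflTransGen.refl
              ((Relation.ReflTransGen.single h2.1).trans hw2) h1.1 hw1
            rcases hw3 with rfl | hw3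
            · exact hanotins (this ▸ List.mem_cons_self)
            · exact hanotins (this ▸ List.mem_cons_of_mem _ hw3)
        · have hb2 : b ∈ y :: t2 := isTrail_last_mem t2 a y b h2
          obtain ⟨w, z, hw1, hz, hws, hrtg⟩ :=
            isTrail_first_common t1 x b (y :: t2) h1.2 hxs hb2
          have hrtgaw : Relation.ReflTransGen E a w :=
            (Relation.ReflTransGen.single h1.1).trans hrtg
          rcases List.mem_cons.1 hz with rfl | hz
          · -- z = y, its predecessor in trail 2 is a
            have : w = a := hjoin a w a _ hrtgaw Relation.ReflTransGen.refl hw1 h2.1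
            subst this
            exact hacyc w (Relation.TransGen.head' h1.1 hrtg)
          · obtain ⟨w2, hw21, hw22, hw23⟩ := isTrail_pred t2 y b h2.2 z hz
            have : w = w2 := hjoin a w w2 _ hrtgaw
              ((Relation.ReflTransGen.single h2.1).trans hw22) hw1 hw21
            subst this
            rcases hw23 with rfl | hw23
            · exact hws (List.mem_cons_self)
            · exact hws (List.mem_cons_of_mem _ hw23)
      subst hxy
      by_cases hxb : x = b
      · subst hxb
        have hnil : ∀ t : List α, IsTrail E x t x → t = [] := by
          intro t ht
          cases t with
          | nil => rfl
          | cons z t =>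
            exact absurd (Relation.TransGen.head' ht.1 (isTrail_rtg t z x ht.2))
              (hacyc x)
        rw [hnil t1 h1.2, hnil t2 h2.2]
      · rw [multitree_of_no_join hacyc hjoin t1 t2 x b hxb h1.2 h2.2]
  termination_by l1 _ _ _ => l1.length

end Aux

lemma Circuit.S_subset_of_orwire {ι : Type} [DecidableEq ι] (C : Circuit ι)
    {x y : C.Gate} (hw : C.wire x y) (hy : C.typ y = GateType.or) :
    C.S x ⊆ C.S y := by
  intro t ht
  exact Circuit.Captures.or y hy x (Finset.mem_filter.2 ⟨Finset.mem_univ x, hw⟩) t ht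

/-- For any normal monotone circuit that is a d-DNNF in zero-suppressed semantics,
each OR-component of the circuit is a multitree. -/
theorem stmt0 {ι : Type} [DecidableEq ι] (C : Circuit ι) (hV : C.VarInj)
    (hNorm : C.Normal) (hD : C.dDNNF) (g : C.Gate) (hg : C.typ g = GateType.or) :
    IsMultitree (fun a b : C.Gate =>
      a ∈ C.orComponent g ∧ b ∈ C.orComponent g ∧ C.wire a b) := by
  set E := fun a b : C.Gate =>
    a ∈ C.orComponent g ∧ b ∈ C.orComponent g ∧ C.wire a b with hE
  have hacyc : ∀ a : C.Gate, ¬ Relation.TransGen E a a := by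
    intro a ha
    exact C.acyclic a (Relation.TransGen.mono (p := C.wire) (fun x y (h : E x y) => h.2.2) a a ha)
  have hmono : ∀ x y : C.Gate, E x y → C.S x ⊆ C.S y := by
    intro x y hxy
    exact C.S_subset_of_orwire hxy.2.2 hxy.2.1.1
  have hrtgmono : ∀ x y : C.Gate, Relation.ReflTransGen E x y → C.S x ⊆ C.S y := by
    intro x y h
    induction h with
    | refl => exact subset_rfl
    | tail _ h ih => exact ih.trans (hmono _ _ h)
  have hjoin : ∀ a w1 w2 z : C.Gate, Relation.ReflTransGen E a w1 →
      Relation.ReflTransGen E a w2 → E w1 z → E w2 z → w1 = w2 := by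
    intro a w1 w2 z h1 h2 e1 e2
    by_contra hne
    have hz : C.typ z = GateType.or := e1.2.1.1
    have hdet := hD.2 z hz w1 w2
      (Finset.mem_filter.2 ⟨Finset.mem_univ _, e1.2.2⟩)
      (Finset.mem_filter.2 ⟨Finset.mem_univ _, e2.2.2⟩) hne
    obtain ⟨t, ht⟩ := hNorm.2.1 a
    exact Set.disjoint_left.1 hdet (hrtgmono a w1 h1 ht) (hrtgmono a w2 h2 ht)
  exact ⟨hacyc, fun a b hab l1 l2 h1 h2 =>
    multitree_of_no_join hacyc hjoin l1 l2 a b hab h1 h2⟩
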